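/- Let C be a compact closed symmetric monoidal category in which every object is self-dual (i.e., C has cups η_A : I → A⊗A and caps ε_A : A⊗A → I satisfying the snake equations). If the monoidal unit I is terminal, then for any two objects A, B there is exactly one morphism A → B. -/
import Mathlib


open CategoryTheory MonoidalCategory Limits

/-- Let `C` be a compact closed symmetric monoidal category in which every object is
self-dual, i.e. there are cups `η_A : I ⟶ A ⊗ A` and caps `ε_A : A ⊗ A ⟶ I`
satisfying the snake equations. If the monoidal unit `I` is terminal, then for any two
objects `A`, `B` there is exactly one morphism `A ⟶ B`. -/
theorem timeNeutral_causal_unique_morphism {C : Type*} [Category C] [MonoidalCategory C]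
    [SymmetricCategory C]
    (η : ∀ X : C, 𝟙_ C ⟶ X ⊗ X) (ε : ∀ X : C, X ⊗ X ⟶ 𝟙_ C)
    (snake₁ : ∀ X : C,
      (λ_ X).inv ≫ (η X ▷ X) ≫ (α_ X X X).hom ≫ (X ◁ ε X) ≫ (ρ_ X).hom = 𝟙 X)
    (snake₂ : ∀ X : C,
      (ρ_ X).inv ≫ (X ◁ η X) ≫ (α_ X X X).inv ≫ (ε X ▷ X) ≫ (λ_ X).hom = 𝟙 X)
    (hT : IsTerminal (𝟙_ C)) (A B : C) :
    ∃ f : A ⟶ B, ∀ g : A ⟶ B, g = f := by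
  refine ⟨(ρ_ A).inv ≫ (A ◁ η B) ≫ (α_ A B B).inv ≫ (hT.from (A ⊗ B) ▷ B) ≫ (λ_ B).hom, ?_⟩
  intro g
  have h1 : hT.from (A ⊗ B) = (g ▷ B) ≫ ε B := hT.hom_ext _ _
  rw [h1]
  calc g = g ≫ ((ρ_ B).inv ≫ (B ◁ η B) ≫ (α_ B B B).inv ≫ (ε B ▷ B) ≫ (λ_ B).hom) := by
        rw [snake₂ B, Category.comp_id]
    _ = _ := by
        simp only [comp_whiskerRight, Category.assoc]
        rw [← Category.assoc g, rightUnitor_inv_naturality, Category.assoc,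
          ← Category.assoc (g ▷ 𝟙_ C), ← whisker_exchange, Category.assoc,
          ← Category.assoc (g ▷ (B ⊗ B)), associator_inv_naturality_left, Category.assoc]
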